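/- Let a, γ : [0,∞) → ℝ be continuous and bounded above and below by positive constants, and let k > 0. Let p, z : [0,∞) → ℝ be differentiable solutions of z'(t) = a(t)z(t) − z(t)² − kγ(t) with p bounded and z(0) > p(0). Then z(t) > p(t) for all t ≥ 0, the difference v = z − p satisfies v'(t) = (a(t) − 2p(t))v(t) − v(t)², and ∫₀^∞ (z(t) − p(t)) dt = ∞ if and only if ∫₀^∞ exp(∫₀^t (a(s) − 2p(s)) ds) dt = ∞. -/

import Mathlib

open Real Filter MeasureTheory Set intervalIntegral

private lemma intInt_of_contOn {f : ℝ → ℝ} (hf : ContinuousOn f (Set.Ici 0)) {T : ℝ}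
    (hT : 0 ≤ T) : IntervalIntegrable f volume 0 T := by
  apply ContinuousOn.intervalIntegrable
  apply hf.mono
  rw [uIcc_of_le hT]
  exact Icc_subset_Ici_self

private lemma ftc_Ici {f : ℝ → ℝ} (hf : ContinuousOn f (Set.Ici 0)) {t : ℝ} (ht : 0 ≤ t) :
    HasDerivWithinAt (fun u => ∫ x in (0:ℝ)..u, f x) (f t) (Set.Ici t) t := by
  have hsub : Set.Ioi t ⊆ Set.Ici 0 := fun x hx => le_of_lt (lt_of_le_of_lt ht hx)
  refine intervalIntegral.integral_hasDerivWithinAt_right (intInt_of_contOn hf ht)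
    ⟨Set.Ioi t, self_mem_nhdsWithin,
      ((hf.mono hsub).aestronglyMeasurable measurableSet_Ioi)⟩
    ((hf t ht).mono hsub)

private lemma contOn_primitive {f : ℝ → ℝ} (hf : ContinuousOn f (Set.Ici 0)) {T : ℝ}
    (hT : 0 ≤ T) : ContinuousOn (fun u => ∫ x in (0:ℝ)..u, f x) (Set.Icc 0 T) := by
  have h := intervalIntegral.continuousOn_primitive_interval' (μ := volume)
    (intInt_of_contOn hf hT) (by rw [uIcc_of_le hT]; exact Set.left_mem_Icc.2 hT)
  rwa [uIcc_of_le hT] at h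

private lemma contOn_primitive_Ici {f : ℝ → ℝ} (hf : ContinuousOn f (Set.Ici 0)) :
    ContinuousOn (fun u => ∫ x in (0:ℝ)..u, f x) (Set.Ici 0) := by
  intro t ht
  have ht' : (0:ℝ) ≤ t := ht
  have h1 := (contOn_primitive hf (by linarith : (0:ℝ) ≤ t + 1)) t ⟨ht', by linarith⟩
  apply h1.mono_of_mem_nhdsWithin
  rw [← Set.Ici_inter_Iic]
  exact inter_mem_nhdsWithin _ (Iic_mem_nhds (by linarith))

theorem stmt8 (a γ p z : ℝ → ℝ) (k a₁ a₂ γ₁ γ₂ : ℝ)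
    (ha : ContinuousOn a (Set.Ici (0:ℝ)))
    (hγ : ContinuousOn γ (Set.Ici (0:ℝ)))
    (ha₁ : 0 < a₁) (hγ₁ : 0 < γ₁)
    (haB : ∀ t ≥ (0:ℝ), a₁ ≤ a t ∧ a t ≤ a₂)
    (hγB : ∀ t ≥ (0:ℝ), γ₁ ≤ γ t ∧ γ t ≤ γ₂)
    (hk : 0 < k)
    (hp : ∀ t ≥ (0:ℝ), HasDerivWithinAt p (a t * p t - p t ^ 2 - k * γ t) (Set.Ici (0:ℝ)) t)
    (hz : ∀ t ≥ (0:ℝ), HasDerivWithinAt z (a t * z t - z t ^ 2 - k * γ t) (Set.Ici (0:ℝ)) t)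
    (hpbd : ∃ M : ℝ, ∀ t ≥ (0:ℝ), |p t| ≤ M)
    (h0 : z 0 > p 0) :
    (∀ t ≥ (0:ℝ), z t > p t) ∧
    (∀ t ≥ (0:ℝ), HasDerivWithinAt (fun t => z t - p t)
      ((a t - 2 * p t) * (z t - p t) - (z t - p t) ^ 2) (Set.Ici (0:ℝ)) t) ∧
    (Tendsto (fun T => ∫ t in (0:ℝ)..T, z t - p t) atTop atTop ↔
      Tendsto (fun T => ∫ t in (0:ℝ)..T, Real.exp (∫ s in (0:ℝ)..t, a s - 2 * p s))
        atTop atTop) := by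
  set v : ℝ → ℝ := fun t => z t - p t with hv_def
  have hv0 : 0 < v 0 := sub_pos.2 h0
  -- derivative of the difference
  have hv : ∀ t ≥ (0:ℝ), HasDerivWithinAt v ((a t - 2 * p t) * v t - v t ^ 2)
      (Set.Ici 0) t := by
    intro t ht
    have h1 := (hz t ht).sub (hp t ht)
    refine h1.congr_deriv ?_
    simp only [hv_def]
    ring
  have hpc : ContinuousOn p (Set.Ici 0) := fun t ht => (hp t ht).continuousWithinAt
  have hzc : ContinuousOn z (Set.Ici 0) := fun t ht => (hz t ht).continuousWithinAt
  have hvc : ContinuousOn v (Set.Ici 0) := hzc.sub hpc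
  set g : ℝ → ℝ := fun t => a t - 2 * p t with hg_def
  have hgc : ContinuousOn g (Set.Ici 0) := ha.sub (continuousOn_const.mul hpc)
  -- positivity of v
  have hpos : ∀ t ≥ (0:ℝ), 0 < v t := by
    intro T hT
    set h : ℝ → ℝ := fun t => g t - v t with hh_def
    have hhc : ContinuousOn h (Set.Ici 0) := hgc.sub hvc
    set B : ℝ → ℝ := fun u => ∫ x in (0:ℝ)..u, h x with hB_def
    set w : ℝ → ℝ := fun u => v u * Real.exp (-(B u)) with hw_def
    have hwc : ContinuousOn w (Set.Icc 0 T) := by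
      refine (hvc.mono Set.Icc_subset_Ici_self).mul ?_
      exact Real.continuous_exp.comp_continuousOn (contOn_primitive hhc hT).neg
    have hwd : ∀ x ∈ Set.Ico (0:ℝ) T, HasDerivWithinAt w 0 (Set.Ici x) x := by
      intro x hx
      have hx0 : (0:ℝ) ≤ x := hx.1
      have hBx : HasDerivWithinAt B (h x) (Set.Ici x) x := ftc_Ici hhc hx0
      have hvx : HasDerivWithinAt v (g x * v x - v x ^ 2) (Set.Ici x) x :=
        (hv x hx0).mono (Set.Ici_subset_Ici.2 hx0)
      have hex : HasDerivWithinAt (fun u => Real.exp (-(B u)))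
          (Real.exp (-(B x)) * (-(h x))) (Set.Ici x) x := hBx.neg.exp
      have h2 := hvx.mul hex
      refine h2.congr_deriv ?_
      simp only [hh_def]
      ring
    have hconst := constant_of_has_deriv_right_zero hwc hwd T (Set.right_mem_Icc.2 hT)
    have hw0 : w 0 = v 0 := by
      simp [hw_def, hB_def, intervalIntegral.integral_same]
    rw [hw0] at hconst
    have hconst' : v T * Real.exp (-(B T)) = v 0 := hconst
    have he : 0 < Real.exp (-(B T)) := Real.exp_pos _
    nlinarith [hconst', hv0, he]
  -- Riccati substitution
  set c : ℝ := (v 0)⁻¹ with hc_def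
  have hc : 0 < c := inv_pos.2 hv0
  set A : ℝ → ℝ := fun u => ∫ x in (0:ℝ)..u, g x with hA_def
  set E : ℝ → ℝ := fun u => Real.exp (A u) with hE_def
  have hAc : ContinuousOn A (Set.Ici 0) := contOn_primitive_Ici hgc
  have hEc : ContinuousOn E (Set.Ici 0) := Real.continuous_exp.comp_continuousOn hAc
  set F : ℝ → ℝ := fun T => ∫ t in (0:ℝ)..T, E t with hF_def
  have hident : ∀ T ≥ (0:ℝ), E T * (v T)⁻¹ = c + F T := by
    intro T hT
    set G : ℝ → ℝ := fun u => E u * (v u)⁻¹ - F u with hG_def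
    have hGc : ContinuousOn G (Set.Icc 0 T) := by
      exact ((hEc.mono Set.Icc_subset_Ici_self).mul
        ((hvc.mono Set.Icc_subset_Ici_self).inv₀ (fun x hx => (hpos x hx.1).ne'))).sub
        (contOn_primitive hEc hT)
    have hGd : ∀ x ∈ Set.Ico (0:ℝ) T, HasDerivWithinAt G 0 (Set.Ici x) x := by
      intro x hx
      have hx0 : (0:ℝ) ≤ x := hx.1
      have hvne : v x ≠ 0 := (hpos x hx0).ne'
      have hAx : HasDerivWithinAt A (g x) (Set.Ici x) x := ftc_Ici hgc hx0
      have hEx : HasDerivWithinAt E (Real.exp (A x) * g x) (Set.Ici x) x := hAx.exp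
      have hvx : HasDerivWithinAt v (g x * v x - v x ^ 2) (Set.Ici x) x :=
        (hv x hx0).mono (Set.Ici_subset_Ici.2 hx0)
      have hvinv : HasDerivWithinAt (fun u => (v u)⁻¹)
          (-(g x * v x - v x ^ 2) / v x ^ 2) (Set.Ici x) x := hvx.inv hvne
      have hFx : HasDerivWithinAt F (E x) (Set.Ici x) x := ftc_Ici hEc hx0
      have h2 := (hEx.mul hvinv).sub hFx
      refine h2.congr_deriv ?_
      simp only [hE_def]
      field_simp
      ring
    have hconst := constant_of_has_deriv_right_zero hGc hGd T (Set.right_mem_Icc.2 hT)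
    have hG0 : G 0 = c := by
      simp [hG_def, hF_def, hE_def, hA_def, intervalIntegral.integral_same, hc_def]
    rw [hG0] at hconst
    have hconst' : E T * (v T)⁻¹ - F T = c := hconst
    linarith
  have hcF : ∀ T ≥ (0:ℝ), 0 < c + F T := by
    intro T hT
    rw [← hident T hT]
    exact mul_pos (Real.exp_pos _) (inv_pos.2 (hpos T hT))
  -- key identity for the integral of v
  have hkey : ∀ T ≥ (0:ℝ), (∫ t in (0:ℝ)..T, v t) = Real.log (c + F T) - Real.log c := by
    intro T hT
    set φ : ℝ → ℝ := fun u => (∫ t in (0:ℝ)..u, v t) - Real.log (c + F u) with hφ_def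
    have hφc : ContinuousOn φ (Set.Icc 0 T) := by
      refine (contOn_primitive hvc hT).sub ?_
      refine ContinuousOn.log ?_ (fun x hx => (hcF x hx.1).ne')
      exact continuousOn_const.add ((contOn_primitive hEc hT).mono (fun x hx => hx))
    have hφd : ∀ x ∈ Set.Ico (0:ℝ) T, HasDerivWithinAt φ 0 (Set.Ici x) x := by
      intro x hx
      have hx0 : (0:ℝ) ≤ x := hx.1
      have hvne : v x ≠ 0 := (hpos x hx0).ne'
      have hIx : HasDerivWithinAt (fun u => ∫ t in (0:ℝ)..u, v t) (v x)
          (Set.Ici x) x := ftc_Ici hvc hx0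
      have hFx : HasDerivWithinAt (fun u => c + F u) (E x) (Set.Ici x) x :=
        (ftc_Ici hEc hx0).const_add c
      have hlog : HasDerivWithinAt (fun u => Real.log (c + F u)) (E x / (c + F x))
          (Set.Ici x) x := hFx.log (hcF x hx0).ne'
      have h2 := hIx.sub hlog
      refine h2.congr_deriv ?_
      have hEq : E x = (c + F x) * v x := by
        have := hident x hx0
        field_simp at this
        linarith [this]
      rw [hEq]
      field_simp [(hcF x hx0).ne']
      ring
    have hconst := constant_of_has_deriv_right_zero hφc hφd T (Set.right_mem_Icc.2 hT)
    have hφ0 : φ 0 = -Real.log c := by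
      simp [hφ_def, hF_def, intervalIntegral.integral_same]
    rw [hφ0] at hconst
    have hconst' : (∫ t in (0:ℝ)..T, v t) - Real.log (c + F T) = -Real.log c := hconst
    linarith
  refine ⟨fun t ht => sub_pos.1 (hpos t ht), hv, ?_⟩
  constructor
  · intro hL
    have hkey' : ∀ᶠ T in atTop, (∫ t in (0:ℝ)..T, z t - p t)
        = Real.log (c + F T) - Real.log c := (eventually_ge_atTop 0).mono hkey
    have h1 : Tendsto (fun T => Real.log (c + F T) - Real.log c) atTop atTop :=
      hL.congr' hkey'
    have h2 : Tendsto (fun T => Real.log (c + F T)) atTop atTop := by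
      have h3 := tendsto_atTop_add_const_right atTop (Real.log c) h1
      simpa using h3
    have h3 : Tendsto (fun T => c + F T) atTop atTop := by
      refine (Real.tendsto_exp_atTop.comp h2).congr' ?_
      filter_upwards [eventually_ge_atTop (0:ℝ)] with T hT
      exact Real.exp_log (hcF T hT)
    have h4 := tendsto_atTop_add_const_right atTop (-c) h3
    have h5 : Tendsto F atTop atTop := by
      refine h4.congr fun T => by ring
    exact h5
  · intro hR
    have h1 : Tendsto (fun T => c + F T) atTop atTop :=
      tendsto_atTop_add_const_left atTop c hR
    have h2 : Tendsto (fun T => Real.log (c + F T)) atTop atTop :=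
      Real.tendsto_log_atTop.comp h1
    have h3 := tendsto_atTop_add_const_right atTop (-Real.log c) h2
    have h4 : Tendsto (fun T => Real.log (c + F T) - Real.log c) atTop atTop := by
      simpa [sub_eq_add_neg] using h3
    refine h4.congr' ?_
    filter_upwards [eventually_ge_atTop (0:ℝ)] with T hT
    exact (hkey T hT).symm
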